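/- Let A and Θ be types, u : A → Θ → ℝ, and f₋, f₊ : Θ → ℝ with −f₋(θ') ≤ u(a, θ') ≤ f₊(θ') for all a ∈ A and θ' ∈ Θ. Let θ : ℕ → Θ be a sequence, T and k natural numbers, and x : Fin k → Θ a fixed 'perturbation' sequence. Suppose L : ℕ → A satisfies: for every t with 1 ≤ t ≤ T and every a ∈ A, ∑_{τ=1}^{k} u(L(t), x(τ)) + ∑_{s=1}^{t} u(L(t), θ(s)) ≥ ∑_{τ=1}^{k} u(a, x(τ)) + ∑_{s=1}^{t} u(a, θ(s)). Then for every a* ∈ A, ∑_{t=1}^{T} (u(a*, θ(t)) − u(L(t), θ(t))) ≤ ∑_{τ=1}^{k} (f₊(x(τ)) + f₋(x(τ))). -/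

import Mathlib

/-- **Be-the-leader with fixed sample perturbations.** If `L t` maximizes cumulative utility
over the augmented sequence consisting of fixed perturbation samples `x 1, …, x k` followed by
the true parameters `θ 1, …, θ t`, then the regret of playing `L t` at step `t` against any
fixed action is bounded by the total payoff range of the perturbation samples. -/
theorem be_the_perturbed_leader {A Θ : Type*} (u : A → Θ → ℝ) (fm fp : Θ → ℝ)
    (hbound : ∀ (a : A) (θ' : Θ), -fm θ' ≤ u a θ' ∧ u a θ' ≤ fp θ')
    (θ : ℕ → Θ) (T k : ℕ) (x : Fin k → Θ) (L : ℕ → A)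
    (hL : ∀ t, 1 ≤ t → t ≤ T → ∀ a : A,
      ∑ τ : Fin k, u (L t) (x τ) + ∑ s ∈ Finset.Icc 1 t, u (L t) (θ s) ≥
        ∑ τ : Fin k, u a (x τ) + ∑ s ∈ Finset.Icc 1 t, u a (θ s)) :
    ∀ a : A, ∑ t ∈ Finset.Icc 1 T, (u a (θ t) - u (L t) (θ t)) ≤
      ∑ τ : Fin k, (fp (x τ) + fm (x τ)) := by
  intro a
  rcases Nat.eq_zero_or_pos T with hT | hT
  · subst hT
    simp only [Finset.Icc_eq_empty_of_lt Nat.zero_lt_one, Finset.sum_empty]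
    apply Finset.sum_nonneg
    intro τ _
    have h := hbound (L 0) (x τ)
    linarith [h.1, h.2]
  · have key : ∀ t, 1 ≤ t → t ≤ T →
        (∑ τ : Fin k, u (L 1) (x τ)) + ∑ s ∈ Finset.Icc 1 t, u (L s) (θ s) ≥
        ∑ τ : Fin k, u (L t) (x τ) + ∑ s ∈ Finset.Icc 1 t, u (L t) (θ s) := by
      intro t ht
      induction t, ht using Nat.le_induction with
      | base => intro _; simp
      | succ n hn ih =>
        intro hn1
        have hnT : n ≤ T := le_trans (Nat.le_succ n) hn1
        have ih' := ih hnT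
        have hLn := hL n hn hnT (L (n + 1))
        rw [Finset.sum_Icc_succ_top (by omega : 1 ≤ n + 1),
          Finset.sum_Icc_succ_top (by omega : 1 ≤ n + 1)]
        linarith
    have hkey := key T (by omega) le_rfl
    have hLT := hL T (by omega) le_rfl a
    have hterm : ∑ τ : Fin k, u (L 1) (x τ) - ∑ τ : Fin k, u a (x τ) ≤
        ∑ τ : Fin k, (fp (x τ) + fm (x τ)) := by
      rw [← Finset.sum_sub_distrib]
      apply Finset.sum_le_sum
      intro τ _
      have h1 := hbound (L 1) (x τ)
      have h2 := hbound a (x τ)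
      linarith [h1.2, h2.1]
    have hsum : ∑ t ∈ Finset.Icc 1 T, (u a (θ t) - u (L t) (θ t)) =
        ∑ t ∈ Finset.Icc 1 T, u a (θ t) - ∑ t ∈ Finset.Icc 1 T, u (L t) (θ t) :=
      Finset.sum_sub_distrib _ _
    linarith
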